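/- Let E be a nonempty complete real normed vector space, let n ≥ 1 be a natural number, and let f : ℝ × E → E be a C^n map. Suppose there exists k ∈ [0,1) such that for every c ∈ ℝ the map x ↦ f(c,x) is Lipschitz with constant k. Then there is a C^n map g : ℝ → E such that for every c ∈ ℝ, g(c) is the unique fixed point of x ↦ f(c,x), i.e. f(c, g(c)) = g(c) and any x with f(c,x) = x equals g(c). -/

import Mathlib

open Set Filter

/-- A `Cⁿ` (`n ≥ 1`) one-parameter family of uniformly contracting maps of a nonempty
complete real normed vector space has a unique fixed point depending `Cⁿ` on the
parameter. -/
theorem fixed_point_of_contracting_family_smooth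
    {E : Type*} [NormedAddCommGroup E] [NormedSpace ℝ E] [CompleteSpace E] [Nonempty E]
    (n : ℕ) (hn : 1 ≤ n)
    (f : ℝ × E → E) (hf : ContDiff ℝ n f)
    (k : NNReal) (hk : k < 1)
    (hlip : ∀ c : ℝ, LipschitzWith k fun x : E => f (c, x)) :
    ∃ g : ℝ → E, ContDiff ℝ n g ∧
      ∀ c : ℝ, f (c, g c) = g c ∧ ∀ x : E, f (c, x) = x → x = g c := by
  have hn' : (1 : WithTop ℕ∞) ≤ n := by exact_mod_cast hn
  have hcontr : ∀ c : ℝ, ContractingWith k (fun x : E => f (c, x)) := fun c => ⟨hk, hlip c⟩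
  set g : ℝ → E := fun c => ContractingWith.fixedPoint (fun x : E => f (c, x)) (hcontr c) with hg
  have hfix : ∀ c, f (c, g c) = g c := fun c => (hcontr c).fixedPoint_isFixedPt
  have huniq : ∀ c (x : E), f (c, x) = x → x = g c := fun c x hx =>
    (hcontr c).fixedPoint_unique hx
  refine ⟨g, ?_, fun c => ⟨hfix c, huniq c⟩⟩
  -- Φ(c, x) = (c, x - f (c, x))
  set Φ : ℝ × E → ℝ × E := fun p => (p.1, p.2 - f p) with hΦ
  have hΦc : ContDiff ℝ n Φ := contDiff_fst.prodMk (contDiff_snd.sub hf)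
  have hdiff : Differentiable ℝ f := hf.differentiable (by exact_mod_cast (show n ≠ 0 by omega))
  rw [contDiff_iff_contDiffAt]
  intro c₀
  set p₀ : ℝ × E := (c₀, g c₀) with hp₀
  set A : ℝ × E →L[ℝ] E := fderiv ℝ f p₀ with hA
  have hfA : HasFDerivAt f A p₀ := (hdiff p₀).hasFDerivAt
  set B : E →L[ℝ] E := A.comp (ContinuousLinearMap.inr ℝ ℝ E) with hB
  have hBnorm : ‖B‖ < 1 := by
    have hpd : HasFDerivAt (fun x : E => f (c₀, x)) B (g c₀) := by
      exact hfA.comp (g c₀) (hasFDerivAt_prodMk_right c₀ (g c₀))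
    exact lt_of_le_of_lt (hpd.le_of_lipschitz (hlip c₀)) hk
  set u : (E →L[ℝ] E)ˣ := Units.oneSub B hBnorm with hu
  set A₁ : ℝ →L[ℝ] E := A.comp (ContinuousLinearMap.inl ℝ ℝ E) with hA₁
  have hAsplit : ∀ (c : ℝ) (x : E), A (c, x) = A₁ c + B x := by
    intro c x
    have : ((c, x) : ℝ × E) = (c, 0) + (0, x) := by simp
    rw [this, map_add]
    rfl
  -- the derivative of Φ at p₀, as a continuous linear equiv
  set Dfwd : ℝ × E →L[ℝ] ℝ × E :=
    (ContinuousLinearMap.fst ℝ ℝ E).prod (ContinuousLinearMap.snd ℝ ℝ E - A) with hDfwd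
  set Dinv : ℝ × E →L[ℝ] ℝ × E :=
    (ContinuousLinearMap.fst ℝ ℝ E).prod
      ((u⁻¹ : (E →L[ℝ] E)ˣ).1.comp ((ContinuousLinearMap.snd ℝ ℝ E) + A₁.comp (ContinuousLinearMap.fst ℝ ℝ E))) with hDinv
  have husub : ∀ x : E, (u : E →L[ℝ] E) x = x - B x := by
    intro x; rw [hu, Units.val_oneSub]; simp
  have h1 : ∀ p : ℝ × E, Dinv (Dfwd p) = p := by
    rintro ⟨c, x⟩
    simp only [hDfwd, hDinv, ContinuousLinearMap.prod_apply, ContinuousLinearMap.coe_fst',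
      ContinuousLinearMap.coe_snd', ContinuousLinearMap.sub_apply, ContinuousLinearMap.comp_apply,
      ContinuousLinearMap.add_apply]
    refine Prod.ext rfl ?_
    have : x - A (c, x) + A₁ c = (u : E →L[ℝ] E) x := by
      rw [husub, hAsplit]; abel
    rw [this]
    calc (u⁻¹ : (E →L[ℝ] E)ˣ).1 ((u : E →L[ℝ] E) x)
        = (((u⁻¹ : (E →L[ℝ] E)ˣ).1 * (u : E →L[ℝ] E)) : E →L[ℝ] E) x := rfl
      _ = x := by rw [u.inv_mul]; rfl
  have h2 : ∀ p : ℝ × E, Dfwd (Dinv p) = p := by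
    rintro ⟨c, y⟩
    simp only [hDfwd, hDinv, ContinuousLinearMap.prod_apply, ContinuousLinearMap.coe_fst',
      ContinuousLinearMap.coe_snd', ContinuousLinearMap.sub_apply, ContinuousLinearMap.comp_apply,
      ContinuousLinearMap.add_apply]
    refine Prod.ext rfl ?_
    set x := (u⁻¹ : (E →L[ℝ] E)ˣ).1 (y + A₁ c) with hx
    have hux : (u : E →L[ℝ] E) x = y + A₁ c := by
      rw [hx]
      calc (u : E →L[ℝ] E) ((u⁻¹ : (E →L[ℝ] E)ˣ).1 (y + A₁ c))
          = (((u : E →L[ℝ] E) * (u⁻¹ : (E →L[ℝ] E)ˣ).1) : E →L[ℝ] E) (y + A₁ c) := rfl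
        _ = y + A₁ c := by rw [u.mul_inv]; rfl
    have : x - B x = y + A₁ c := by rw [← husub]; exact hux
    rw [hAsplit c x]
    have := this
    calc x - (A₁ c + B x) = (x - B x) - A₁ c := by abel
    _ = y := by rw [this]; abel
  set D : (ℝ × E) ≃L[ℝ] (ℝ × E) := ContinuousLinearEquiv.equivOfInverse Dfwd Dinv h1 h2 with hD
  have hΦD : HasFDerivAt Φ (D : ℝ × E →L[ℝ] ℝ × E) p₀ := by
    have : HasFDerivAt Φ Dfwd p₀ := HasFDerivAt.prodMk hasFDerivAt_fst (HasFDerivAt.sub hasFDerivAt_snd hfA)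
    exact this
  have hΦca : ContDiffAt ℝ n Φ p₀ := hΦc.contDiffAt
  have hn'' : (n : WithTop ℕ∞) ≠ 0 := by exact_mod_cast (show n ≠ 0 by omega)
  set inv := hΦca.localInverse hΦD hn'' with hinv
  have hinvCD : ContDiffAt ℝ n inv (Φ p₀) := hΦca.to_localInverse hΦD hn''
  have hΦp₀ : Φ p₀ = (c₀, 0) := by
    simp only [hΦ, hp₀]
    rw [hfix c₀]; simp
  have hright : ∀ᶠ q in nhds (Φ p₀), Φ (inv q) = q :=
    (hΦca.hasStrictFDerivAt' hΦD hn'').eventually_right_inverse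
  -- g c = (inv (c, 0)).2 near c₀
  have hcont : ContinuousAt (fun c : ℝ => ((c, 0) : ℝ × E)) c₀ := by fun_prop
  have hev : ∀ᶠ c in nhds c₀, Φ (inv (c, 0)) = (c, 0) := by
    have : Filter.Tendsto (fun c : ℝ => ((c, 0) : ℝ × E)) (nhds c₀) (nhds (Φ p₀)) := by
      rw [hΦp₀]; exact hcont
    exact this.eventually hright
  have hkey : ∀ᶠ c in nhds c₀, g c = (inv (c, 0)).2 := by
    filter_upwards [hev] with c hc
    have h1c : (inv (c, 0)).1 = c := congrArg Prod.fst hc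
    have h2c : (inv (c, 0)).2 - f (inv (c, 0)) = 0 := congrArg Prod.snd hc
    have hfz : f (inv (c, 0)) = (inv (c, 0)).2 := (sub_eq_zero.mp h2c).symm
    have heq : ((c, (inv (c,0)).2) : ℝ × E) = inv (c, 0) := Prod.ext_iff.mpr ⟨h1c.symm, rfl⟩
    have : f (c, (inv (c, 0)).2) = (inv (c, 0)).2 := by rw [heq]; exact hfz
    exact (huniq c _ this).symm
  have hcd1 : ContDiffAt ℝ n (fun c : ℝ => inv (c, 0)) c₀ :=
    ContDiffAt.comp c₀ (hΦp₀ ▸ hinvCD) (ContDiffAt.prodMk contDiffAt_id contDiffAt_const)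
  exact ((contDiff_snd.contDiffAt.comp c₀ hcd1)).congr_of_eventuallyEq hkey
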